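/- arXiv:2106.08100 — 7 statements merged into one kernel-verified Lean document; each statement's English description precedes it below -/
import Mathlib

section
/- Let f : ℝ^r → ℝ be defined by f(x) = exp(∑_{j=1}^r x_j) / (1 + exp(∑_{j=1}^r x_j)). Suppose x, y ∈ ℝ^r satisfy |x_i − y_i| ≤ δ/r for all i, for some constant δ ≥ 0, and let p be the number of coordinates where x and y differ. Then e^{−δp/r} ≤ f(x)/f(y) ≤ e^{δp/r} and e^{−δp/r} ≤ (1−f(x))/(1−f(y)) ≤ e^{δp/r}. -/
noncomputable def logistic (s : ℝ) : ℝ := Real.exp s / (1 + Real.exp s)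

open Real in
lemma logistic_ratio_bounds (s t Δ : ℝ) (hΔ : 0 ≤ Δ) (hst : |s - t| ≤ Δ) :
    Real.exp (-Δ) ≤ logistic s / logistic t ∧
    logistic s / logistic t ≤ Real.exp Δ ∧
    Real.exp (-Δ) ≤ (1 - logistic s) / (1 - logistic t) ∧
    (1 - logistic s) / (1 - logistic t) ≤ Real.exp Δ := by
  have h1 : s - t ≤ Δ := (abs_le.mp hst).2
  have h2 : t - s ≤ Δ := by have := (abs_le.mp hst).1; linarith
  have hps : (0:ℝ) < 1 + exp s := by positivity
  have hpt : (0:ℝ) < 1 + exp t := by positivity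
  have hes := exp_pos s
  have het := exp_pos t
  have hratio : logistic s / logistic t = (exp s * (1 + exp t)) / (exp t * (1 + exp s)) := by
    unfold logistic
    field_simp
  have hone : ∀ u : ℝ, 1 - logistic u = 1 / (1 + exp u) := by
    intro u
    unfold logistic
    field_simp
    ring
  have hratio2 : (1 - logistic s) / (1 - logistic t) = (1 + exp t) / (1 + exp s) := by
    rw [hone, hone]
    field_simp
  refine ⟨?_, ?_, ?_, ?_⟩
  · rw [hratio, le_div_iff₀ (by positivity)]
    have e1 : exp (t - Δ) ≤ exp s := exp_le_exp.mpr (by linarith)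
    have e2 : exp (s + t - Δ) ≤ exp (s + t) := exp_le_exp.mpr (by linarith)
    calc exp (-Δ) * (exp t * (1 + exp s)) = exp (t - Δ) + exp (s + t - Δ) := by
          simp only [mul_add, mul_one, ← exp_add]; ring_nf
      _ ≤ exp s + exp (s + t) := add_le_add e1 e2
      _ = exp s * (1 + exp t) := by rw [mul_add, mul_one, ← exp_add]
  · rw [hratio, div_le_iff₀ (by positivity)]
    have e1 : exp s ≤ exp (t + Δ) := exp_le_exp.mpr (by linarith)
    have e2 : exp (s + t) ≤ exp (s + t + Δ) := exp_le_exp.mpr (by linarith)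
    calc exp s * (1 + exp t) = exp s + exp (s + t) := by rw [mul_add, mul_one, ← exp_add]
      _ ≤ exp (t + Δ) + exp (s + t + Δ) := add_le_add e1 e2
      _ = exp Δ * (exp t * (1 + exp s)) := by
          simp only [mul_add, mul_one, ← exp_add]; ring_nf
  · rw [hratio2, le_div_iff₀ (by positivity)]
    have e1 : exp (-Δ) ≤ 1 := exp_le_one_iff.mpr (by linarith)
    have e2 : exp (s - Δ) ≤ exp t := exp_le_exp.mpr (by linarith)
    calc exp (-Δ) * (1 + exp s) = exp (-Δ) + exp (s - Δ) := by
          simp only [mul_add, mul_one, ← exp_add]; ring_nf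
      _ ≤ 1 + exp t := add_le_add e1 e2
  · rw [hratio2, div_le_iff₀ (by positivity)]
    have e1 : (1:ℝ) ≤ exp Δ := one_le_exp hΔ
    have e2 : exp t ≤ exp (Δ + s) := exp_le_exp.mpr (by linarith)
    calc (1 + exp t : ℝ) ≤ exp Δ + exp (Δ + s) := add_le_add e1 e2
      _ = exp Δ * (1 + exp s) := by rw [mul_add, mul_one, ← exp_add]

theorem stmt0 (r : ℕ) (hr : 0 < r) (δ : ℝ) (hδ : 0 ≤ δ)
    (x y : Fin r → ℝ) (h : ∀ i, |x i - y i| ≤ δ / r)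
    (p : ℕ) (hp : p = Nat.card {i : Fin r // x i ≠ y i}) :
    Real.exp (-(δ * p) / r) ≤ logistic (∑ j, x j) / logistic (∑ j, y j) ∧
    logistic (∑ j, x j) / logistic (∑ j, y j) ≤ Real.exp ((δ * p) / r) ∧
    Real.exp (-(δ * p) / r) ≤ (1 - logistic (∑ j, x j)) / (1 - logistic (∑ j, y j)) ∧
    (1 - logistic (∑ j, x j)) / (1 - logistic (∑ j, y j)) ≤ Real.exp ((δ * p) / r) := by
  classical
  set S : Finset (Fin r) := Finset.univ.filter (fun i => x i ≠ y i) with hS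
  have hpS : p = S.card := by
    rw [hp, Nat.card_eq_fintype_card, Fintype.card_subtype]
  have hsum : ∑ j, x j - ∑ j, y j = ∑ j ∈ S, (x j - y j) := by
    rw [← Finset.sum_sub_distrib]
    refine (Finset.sum_filter_of_ne ?_).symm
    intro i _ hne
    intro heq
    exact hne (by linarith [sub_eq_zero.mpr heq])
  have habs : |∑ j, x j - ∑ j, y j| ≤ (δ * p) / r := by
    rw [hsum]
    calc |∑ j ∈ S, (x j - y j)| ≤ ∑ j ∈ S, |x j - y j| := Finset.abs_sum_le_sum_abs _ _
      _ ≤ ∑ _j ∈ S, δ / r := Finset.sum_le_sum (fun i _ => h i)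
      _ = S.card * (δ / r) := by rw [Finset.sum_const, nsmul_eq_mul]
      _ = (δ * p) / r := by rw [hpS]; ring
  have hΔ : 0 ≤ (δ * p) / r := by positivity
  have := logistic_ratio_bounds (∑ j, x j) (∑ j, y j) ((δ * p) / r) hΔ habs
  rwa [← neg_div] at this
end

section
/- Let n ≥ r ≥ 1 and β ∈ ℝ^n with max_{j,k} |β_j − β_k| ≤ δ/r for a constant δ ≥ 0. For each r-subset W of [n] define λ_W(β) = exp(∑_{j∈W} β_j)/(1 + exp(∑_{j∈W} β_j)). Then for any two r-subsets W, W′: e^{−δ(1−|W∩W′|/r)} ≤ λ_W(β)/λ_{W′}(β) ≤ e^{δ(1−|W∩W′|/r)}, and the same two-sided bound holds for (1−λ_W(β))/(1−λ_{W′}(β)). -/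
noncomputable def lamW {n : ℕ} (β : Fin n → ℝ) (W : Finset (Fin n)) : ℝ :=
  Real.exp (∑ j ∈ W, β j) / (1 + Real.exp (∑ j ∈ W, β j))

lemma f_ratio (x y c : ℝ) (hc : 0 ≤ c) (h : x ≤ y + c) :
    Real.exp x / (1 + Real.exp x) ≤ Real.exp c * (Real.exp y / (1 + Real.exp y)) := by
  have hx := Real.exp_pos x
  have hy := Real.exp_pos y
  have h1 : Real.exp x ≤ Real.exp (y + c) := Real.exp_le_exp.2 h
  have h2 : Real.exp (y + c) = Real.exp c * Real.exp y := by
    rw [← Real.exp_add]; ring_nf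
  have h3 : (1 : ℝ) ≤ Real.exp c := Real.one_le_exp hc
  rw [div_le_iff₀ (by positivity)]
  have : Real.exp c * (Real.exp y / (1 + Real.exp y)) * (1 + Real.exp x)
      = (Real.exp c * Real.exp y * (1 + Real.exp x)) / (1 + Real.exp y) := by ring
  rw [this, le_div_iff₀ (by positivity)]
  nlinarith [mul_pos hx hy]

lemma g_ratio (x y c : ℝ) (hc : 0 ≤ c) (h : y ≤ x + c) :
    1 / (1 + Real.exp x) ≤ Real.exp c * (1 / (1 + Real.exp y)) := by
  have hx := Real.exp_pos x
  have hy := Real.exp_pos y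
  have h1 : Real.exp y ≤ Real.exp (x + c) := Real.exp_le_exp.2 h
  have h2 : Real.exp (x + c) = Real.exp c * Real.exp x := by
    rw [← Real.exp_add]; ring_nf
  have h3 : (1 : ℝ) ≤ Real.exp c := Real.one_le_exp hc
  rw [div_le_iff₀ (by positivity)]
  have : Real.exp c * (1 / (1 + Real.exp y)) * (1 + Real.exp x)
      = (Real.exp c * (1 + Real.exp x)) / (1 + Real.exp y) := by ring
  rw [this, le_div_iff₀ (by positivity)]
  nlinarith

lemma sum_diff_one_side (n r : ℕ) (hr : 1 ≤ r) (δ : ℝ) (hδ : 0 ≤ δ)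
    (β : Fin n → ℝ) (hβ : ∀ j k, |β j - β k| ≤ δ / r)
    (W W' : Finset (Fin n)) (hW : W.card = r) (hW' : W'.card = r) :
    (∑ j ∈ W, β j) - (∑ j ∈ W', β j) ≤ δ * (1 - (W ∩ W').card / (r : ℝ)) := by
  set m := (W ∩ W').card with hm
  have hmr : m ≤ r := hW ▸ Finset.card_le_card Finset.inter_subset_left
  have hrpos : (0:ℝ) < r := by exact_mod_cast hr
  have hcardA : ((W \ W').card : ℝ) = r - m := by
    have := Finset.card_inter_add_card_sdiff W W'
    have : (W \ W').card = r - m := by omega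
    rw [this]
    push_cast [Nat.cast_sub hmr]
    ring
  have hcardB : ((W' \ W).card : ℝ) = r - m := by
    have h1 := Finset.card_inter_add_card_sdiff W' W
    have h2 : (W' ∩ W).card = m := by rw [Finset.inter_comm]
    have : (W' \ W).card = r - m := by omega
    rw [this]
    push_cast [Nat.cast_sub hmr]
    ring
  have hsplit : (∑ j ∈ W, β j) - (∑ j ∈ W', β j)
      = (∑ j ∈ W \ W', β j) - (∑ j ∈ W' \ W, β j) := by
    have h1 : (∑ j ∈ W ∩ W', β j) + (∑ j ∈ W \ W', β j) = ∑ j ∈ W, β j :=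
      Finset.sum_inter_add_sum_sdiff W W' β
    have h2 : (∑ j ∈ W' ∩ W, β j) + (∑ j ∈ W' \ W, β j) = ∑ j ∈ W', β j :=
      Finset.sum_inter_add_sum_sdiff W' W β
    rw [Finset.inter_comm] at h2
    linarith
  rcases Finset.eq_empty_or_nonempty (W' \ W) with hB | hB
  · have hsub : W' ⊆ W := by
      intro x hx
      by_contra hxW
      exact absurd (Finset.mem_sdiff.2 ⟨hx, hxW⟩) (by simp [hB])
    have heq : W' = W := Finset.eq_of_subset_of_card_le hsub (by omega)
    subst heq
    simp only [Finset.inter_self] at hm ⊢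
    have : (m : ℝ) = r := by rw [hm, hW']
    rw [this]
    have : (1 : ℝ) - (r:ℝ)/(r:ℝ) = 0 := by field_simp; norm_num
    simp [sub_self, this]
  · obtain ⟨k, hkB, hk⟩ := Finset.exists_min_image (W' \ W) β hB
    have hA : ∀ j ∈ W \ W', β j ≤ β k + δ / r := by
      intro j _
      have := hβ j k
      have := abs_le.1 this
      linarith [this.2]
    have hAle : (∑ j ∈ W \ W', β j) ≤ (W \ W').card * (β k + δ / r) := by
      calc (∑ j ∈ W \ W', β j) ≤ ∑ _j ∈ W \ W', (β k + δ / r) :=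
            Finset.sum_le_sum hA
        _ = (W \ W').card * (β k + δ / r) := by rw [Finset.sum_const, nsmul_eq_mul]
    have hBge : ((W' \ W).card : ℝ) * β k ≤ (∑ j ∈ W' \ W, β j) := by
      calc ((W' \ W).card : ℝ) * β k = ∑ _j ∈ W' \ W, β k := by
            rw [Finset.sum_const, nsmul_eq_mul]
        _ ≤ ∑ j ∈ W' \ W, β j := Finset.sum_le_sum hk
    rw [hsplit]
    have key : (∑ j ∈ W \ W', β j) - (∑ j ∈ W' \ W, β j)
        ≤ ((r:ℝ) - m) * (δ / r) := by
      have := hAle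
      rw [hcardA] at hAle
      rw [hcardB] at hBge
      nlinarith
    have : ((r:ℝ) - m) * (δ / r) = δ * (1 - (m:ℝ) / r) := by
      field_simp
    linarith

lemma sum_diff_abs (n r : ℕ) (hr : 1 ≤ r) (δ : ℝ) (hδ : 0 ≤ δ)
    (β : Fin n → ℝ) (hβ : ∀ j k, |β j - β k| ≤ δ / r)
    (W W' : Finset (Fin n)) (hW : W.card = r) (hW' : W'.card = r) :
    |(∑ j ∈ W, β j) - (∑ j ∈ W', β j)| ≤ δ * (1 - (W ∩ W').card / (r : ℝ)) := by
  rw [abs_le]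
  constructor
  · have := sum_diff_one_side n r hr δ hδ β hβ W' W hW' hW
    rw [Finset.inter_comm] at this
    linarith
  · exact sum_diff_one_side n r hr δ hδ β hβ W W' hW hW'

theorem stmt4 (n r : ℕ) (hr : 1 ≤ r) (hrn : r ≤ n) (δ : ℝ) (hδ : 0 ≤ δ)
    (β : Fin n → ℝ) (hβ : ∀ j k, |β j - β k| ≤ δ / r)
    (W W' : Finset (Fin n)) (hW : W.card = r) (hW' : W'.card = r) :
    Real.exp (-(δ * (1 - (W ∩ W').card / (r : ℝ)))) ≤ lamW β W / lamW β W' ∧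
    lamW β W / lamW β W' ≤ Real.exp (δ * (1 - (W ∩ W').card / (r : ℝ))) ∧
    Real.exp (-(δ * (1 - (W ∩ W').card / (r : ℝ)))) ≤ (1 - lamW β W) / (1 - lamW β W') ∧
    (1 - lamW β W) / (1 - lamW β W') ≤ Real.exp (δ * (1 - (W ∩ W').card / (r : ℝ))) := by
  set x := ∑ j ∈ W, β j
  set y := ∑ j ∈ W', β j
  set c := δ * (1 - (W ∩ W').card / (r : ℝ)) with hc
  have habs : |x - y| ≤ c := sum_diff_abs n r hr δ hδ β hβ W W' hW hW'
  have hcnn : 0 ≤ c := (abs_nonneg _).trans habs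
  obtain ⟨h1, h2⟩ := abs_le.1 habs
  have hx := Real.exp_pos x
  have hy := Real.exp_pos y
  have hfx : 0 < lamW β W := by
    unfold lamW; positivity
  have hfy : 0 < lamW β W' := by
    unfold lamW; positivity
  have hgx : 1 - lamW β W = 1 / (1 + Real.exp x) := by
    unfold lamW; field_simp; simp only [x]; ring
  have hgy : 1 - lamW β W' = 1 / (1 + Real.exp y) := by
    unfold lamW; field_simp; simp only [y]; ring
  have hgx' : 0 < (1:ℝ) / (1 + Real.exp x) := by positivity
  have hgy' : 0 < (1:ℝ) / (1 + Real.exp y) := by positivity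
  have hec := Real.exp_pos c
  have fxy : lamW β W ≤ Real.exp c * lamW β W' :=
    f_ratio x y c hcnn (by linarith)
  have fyx : lamW β W' ≤ Real.exp c * lamW β W :=
    f_ratio y x c hcnn (by linarith)
  have gxy : (1 - lamW β W) ≤ Real.exp c * (1 - lamW β W') := by
    rw [hgx, hgy]; exact g_ratio x y c hcnn (by linarith)
  have gyx : (1 - lamW β W') ≤ Real.exp c * (1 - lamW β W) := by
    rw [hgy, hgx]; exact g_ratio y x c hcnn (by linarith)
  have hexpneg : Real.exp (-c) * Real.exp c = 1 := by
    rw [← Real.exp_add]; simp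
  have hgxpos : 0 < 1 - lamW β W := hgx ▸ hgx'
  have hgypos : 0 < 1 - lamW β W' := hgy ▸ hgy'
  refine ⟨?_, ?_, ?_, ?_⟩
  · rw [le_div_iff₀ hfy]
    nlinarith [Real.exp_pos (-c)]
  · rw [div_le_iff₀ hfy]
    linarith
  · rw [le_div_iff₀ hgypos]
    nlinarith [Real.exp_pos (-c)]
  · rw [div_le_iff₀ hgypos]
    linarith
end

section
/- Let β ∈ ℝ^n with max_{j,k} |β_j − β_k| ≤ δ/r, and set λ(β) = binom(n,r)^{−1} ∑_{W ∈ S_r(n)} λ_W(β). Then for every r-subset W, e^{−δ} ≤ λ_W(β)/λ(β) ≤ e^{δ}. Moreover, writing Λ(β) = binom(n,r)^{−1} ∑_{W ∈ S_r(n)} λ_W(β)(1−λ_W(β)), we have e^{−2δ} ≤ λ_W(β)(1−λ_W(β))/Λ(β) ≤ e^{2δ} for every r-subset W. -/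
noncomputable def lamAvg (n r : ℕ) (β : Fin n → ℝ) : ℝ :=
  (n.choose r : ℝ)⁻¹ * ∑ W ∈ Finset.powersetCard r (Finset.univ : Finset (Fin n)), lamW β W

noncomputable def LamAvg (n r : ℕ) (β : Fin n → ℝ) : ℝ :=
  (n.choose r : ℝ)⁻¹ *
    ∑ W ∈ Finset.powersetCard r (Finset.univ : Finset (Fin n)), lamW β W * (1 - lamW β W)

lemma aux_f_le (s t d : ℝ) (hd : 0 ≤ d) (h : s ≤ t + d) :
    Real.exp s / (1 + Real.exp s) ≤ Real.exp d * (Real.exp t / (1 + Real.exp t)) := by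
  rw [mul_div_assoc', div_le_div_iff₀ (by positivity) (by positivity)]
  have h1 : Real.exp s ≤ Real.exp t * Real.exp d := by
    rw [← Real.exp_add]; exact Real.exp_le_exp.2 (by linarith)
  have h2 : Real.exp s * Real.exp t ≤ Real.exp d * (Real.exp s * Real.exp t) := by
    nlinarith [mul_pos (Real.exp_pos s) (Real.exp_pos t), Real.one_le_exp hd]
  nlinarith [Real.exp_pos s, Real.exp_pos t]

lemma aux_one_sub_f (s : ℝ) :
    1 - Real.exp s / (1 + Real.exp s) = Real.exp (-s) / (1 + Real.exp (-s)) := by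
  rw [Real.exp_neg]
  have := Real.exp_pos s
  field_simp
  ring

lemma aux_g_le (s t d : ℝ) (hd : 0 ≤ d) (h : |s - t| ≤ d) :
    (Real.exp s / (1 + Real.exp s)) * (1 - Real.exp s / (1 + Real.exp s)) ≤
      Real.exp (2 * d) *
        ((Real.exp t / (1 + Real.exp t)) * (1 - Real.exp t / (1 + Real.exp t))) := by
  rw [aux_one_sub_f, aux_one_sub_f]
  rw [abs_le] at h
  have h1 : Real.exp s / (1 + Real.exp s) ≤ Real.exp d * (Real.exp t / (1 + Real.exp t)) :=
    aux_f_le s t d hd (by linarith)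
  have h2 : Real.exp (-s) / (1 + Real.exp (-s)) ≤
      Real.exp d * (Real.exp (-t) / (1 + Real.exp (-t))) :=
    aux_f_le (-s) (-t) d hd (by linarith)
  have hp1 : (0:ℝ) ≤ Real.exp s / (1 + Real.exp s) := by positivity
  have hp2 : (0:ℝ) ≤ Real.exp d * (Real.exp (-t) / (1 + Real.exp (-t))) := by positivity
  calc (Real.exp s / (1 + Real.exp s)) * (Real.exp (-s) / (1 + Real.exp (-s)))
      ≤ (Real.exp d * (Real.exp t / (1 + Real.exp t))) *
        (Real.exp d * (Real.exp (-t) / (1 + Real.exp (-t)))) :=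
        mul_le_mul h1 h2 (by positivity) (by positivity)
    _ = Real.exp (2 * d) *
        ((Real.exp t / (1 + Real.exp t)) * (Real.exp (-t) / (1 + Real.exp (-t)))) := by
        rw [two_mul, Real.exp_add]; ring

lemma aux_sum_diff {n r : ℕ} (hr : 1 ≤ r) (δ : ℝ) (β : Fin n → ℝ)
    (hβ : ∀ j k, |β j - β k| ≤ δ / r)
    (W W' : Finset (Fin n)) (hW : W.card = r) (hW' : W'.card = r) :
    |(∑ j ∈ W, β j) - ∑ j ∈ W', β j| ≤ δ := by
  have hrne : (r : ℝ) ≠ 0 := by positivity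
  have e : (W : Finset (Fin n)) ≃ (W' : Finset (Fin n)) :=
    Finset.equivOfCardEq (hW.trans hW'.symm)
  have hs : ∑ j ∈ W', β j = ∑ x ∈ W.attach, β (e x) := by
    rw [← Finset.sum_attach W' β]
    exact (Equiv.sum_comp e (fun y => β y.1)).symm
  rw [hs, ← Finset.sum_attach W β, ← Finset.sum_sub_distrib]
  calc |∑ x ∈ W.attach, (β x.1 - β (e x))|
      ≤ ∑ x ∈ W.attach, |β x.1 - β (e x)| := Finset.abs_sum_le_sum_abs _ _
    _ ≤ ∑ _x ∈ W.attach, δ / r := Finset.sum_le_sum (fun x _ => hβ _ _)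
    _ = r * (δ / r) := by
        rw [Finset.sum_const, Finset.card_attach, hW, nsmul_eq_mul]
    _ = δ := by field_simp

theorem stmt5 (n r : ℕ) (hr : 1 ≤ r) (hrn : r ≤ n) (δ : ℝ) (hδ : 0 ≤ δ)
    (β : Fin n → ℝ) (hβ : ∀ j k, |β j - β k| ≤ δ / r)
    (W : Finset (Fin n)) (hW : W.card = r) :
    (Real.exp (-δ) ≤ lamW β W / lamAvg n r β ∧ lamW β W / lamAvg n r β ≤ Real.exp δ) ∧
    (Real.exp (-(2 * δ)) ≤ lamW β W * (1 - lamW β W) / LamAvg n r β ∧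
      lamW β W * (1 - lamW β W) / LamAvg n r β ≤ Real.exp (2 * δ)) := by
  set P := Finset.powersetCard r (Finset.univ : Finset (Fin n)) with hP
  have hcardP : P.card = n.choose r := by
    rw [hP, Finset.card_powersetCard, Finset.card_univ, Fintype.card_fin]
  have hC : (0:ℝ) < (n.choose r : ℝ) := by
    exact_mod_cast Nat.choose_pos hrn
  -- per-set bounds
  have key : ∀ W' ∈ P,
      (lamW β W' ≤ Real.exp δ * lamW β W ∧ lamW β W ≤ Real.exp δ * lamW β W') ∧
      (lamW β W' * (1 - lamW β W') ≤ Real.exp (2*δ) * (lamW β W * (1 - lamW β W)) ∧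
       lamW β W * (1 - lamW β W) ≤ Real.exp (2*δ) * (lamW β W' * (1 - lamW β W'))) := by
    intro W' hW'
    have hcard : W'.card = r := (Finset.mem_powersetCard.1 hW').2
    have hdiff : |(∑ j ∈ W', β j) - ∑ j ∈ W, β j| ≤ δ :=
      aux_sum_diff hr δ β hβ W' W hcard hW
    have hdiff' : |(∑ j ∈ W, β j) - ∑ j ∈ W', β j| ≤ δ := by
      rw [abs_sub_comm]; exact hdiff
    rw [abs_le] at hdiff hdiff'
    exact ⟨⟨aux_f_le _ _ _ hδ (by linarith [hdiff.2]),
           aux_f_le _ _ _ hδ (by linarith [hdiff.2])⟩,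
          ⟨aux_g_le _ _ _ hδ (abs_le.2 hdiff),
           aux_g_le _ _ _ hδ (abs_le.2 hdiff')⟩⟩
  -- positivity of lamW and g
  have hlamWpos : 0 < lamW β W := by unfold lamW; positivity
  have hgWpos : 0 < lamW β W * (1 - lamW β W) := by
    unfold lamW
    rw [aux_one_sub_f]
    positivity
  -- bounds on lamAvg
  have hsum_ub : ∑ W' ∈ P, lamW β W' ≤ (n.choose r : ℝ) * (Real.exp δ * lamW β W) := by
    calc ∑ W' ∈ P, lamW β W' ≤ ∑ _W' ∈ P, Real.exp δ * lamW β W :=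
          Finset.sum_le_sum (fun W' h => ((key W' h).1).1)
      _ = (n.choose r : ℝ) * (Real.exp δ * lamW β W) := by
          rw [Finset.sum_const, hcardP, nsmul_eq_mul]
  have hsum_lb : (n.choose r : ℝ) * (Real.exp (-δ) * lamW β W) ≤ ∑ W' ∈ P, lamW β W' := by
    have : ∀ W' ∈ P, Real.exp (-δ) * lamW β W ≤ lamW β W' := by
      intro W' h
      have := ((key W' h).1).2
      rw [Real.exp_neg, inv_mul_le_iff₀ (Real.exp_pos δ)]
      exact this
    calc (n.choose r : ℝ) * (Real.exp (-δ) * lamW β W)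
        = ∑ _W' ∈ P, Real.exp (-δ) * lamW β W := by
          rw [Finset.sum_const, hcardP, nsmul_eq_mul]
      _ ≤ ∑ W' ∈ P, lamW β W' := Finset.sum_le_sum this
  have hAvg_ub : lamAvg n r β ≤ Real.exp δ * lamW β W := by
    rw [lamAvg, ← hP]
    rw [inv_mul_le_iff₀ hC]
    calc ∑ W' ∈ P, lamW β W' ≤ (n.choose r : ℝ) * (Real.exp δ * lamW β W) := hsum_ub
      _ = (n.choose r : ℝ) * (Real.exp δ * lamW β W) := rfl
  have hAvg_lb : Real.exp (-δ) * lamW β W ≤ lamAvg n r β := by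
    rw [lamAvg, ← hP, le_inv_mul_iff₀ hC]
    exact hsum_lb
  have hAvg_pos : 0 < lamAvg n r β :=
    lt_of_lt_of_le (by positivity) hAvg_lb
  -- same for LamAvg
  have hsum_ub2 : ∑ W' ∈ P, lamW β W' * (1 - lamW β W') ≤
      (n.choose r : ℝ) * (Real.exp (2*δ) * (lamW β W * (1 - lamW β W))) := by
    calc ∑ W' ∈ P, lamW β W' * (1 - lamW β W')
        ≤ ∑ _W' ∈ P, Real.exp (2*δ) * (lamW β W * (1 - lamW β W)) :=
          Finset.sum_le_sum (fun W' h => ((key W' h).2).1)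
      _ = _ := by rw [Finset.sum_const, hcardP, nsmul_eq_mul]
  have hsum_lb2 : (n.choose r : ℝ) * (Real.exp (-(2*δ)) * (lamW β W * (1 - lamW β W))) ≤
      ∑ W' ∈ P, lamW β W' * (1 - lamW β W') := by
    have : ∀ W' ∈ P, Real.exp (-(2*δ)) * (lamW β W * (1 - lamW β W)) ≤
        lamW β W' * (1 - lamW β W') := by
      intro W' h
      have h2 := ((key W' h).2).2
      rw [Real.exp_neg, inv_mul_le_iff₀ (Real.exp_pos _)]
      exact h2
    calc (n.choose r : ℝ) * (Real.exp (-(2*δ)) * (lamW β W * (1 - lamW β W)))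
        = ∑ _W' ∈ P, Real.exp (-(2*δ)) * (lamW β W * (1 - lamW β W)) := by
          rw [Finset.sum_const, hcardP, nsmul_eq_mul]
      _ ≤ _ := Finset.sum_le_sum this
  have hLAvg_ub : LamAvg n r β ≤ Real.exp (2*δ) * (lamW β W * (1 - lamW β W)) := by
    rw [LamAvg, ← hP, inv_mul_le_iff₀ hC]
    exact hsum_ub2
  have hLAvg_lb : Real.exp (-(2*δ)) * (lamW β W * (1 - lamW β W)) ≤ LamAvg n r β := by
    rw [LamAvg, ← hP, le_inv_mul_iff₀ hC]
    exact hsum_lb2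
  have hLAvg_pos : 0 < LamAvg n r β :=
    lt_of_lt_of_le (by positivity) hLAvg_lb
  have eδ := Real.exp_pos δ
  have e2δ := Real.exp_pos (2*δ)
  have hexpmul : Real.exp (-δ) * Real.exp δ = 1 := by
    rw [← Real.exp_add]; simp
  have hexpmul2 : Real.exp (-(2*δ)) * Real.exp (2*δ) = 1 := by
    rw [← Real.exp_add]; simp
  refine ⟨⟨?_, ?_⟩, ⟨?_, ?_⟩⟩
  · rw [le_div_iff₀ hAvg_pos]
    calc Real.exp (-δ) * lamAvg n r β ≤ Real.exp (-δ) * (Real.exp δ * lamW β W) := by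
          exact mul_le_mul_of_nonneg_left hAvg_ub (le_of_lt (Real.exp_pos _))
      _ = lamW β W := by rw [← mul_assoc, hexpmul, one_mul]
  · rw [div_le_iff₀ hAvg_pos]
    calc lamW β W = Real.exp δ * (Real.exp (-δ) * lamW β W) := by
          rw [← mul_assoc, mul_comm (Real.exp δ), hexpmul, one_mul]
      _ ≤ Real.exp δ * lamAvg n r β :=
          mul_le_mul_of_nonneg_left hAvg_lb (le_of_lt eδ)
  · rw [le_div_iff₀ hLAvg_pos]
    calc Real.exp (-(2*δ)) * LamAvg n r β
        ≤ Real.exp (-(2*δ)) * (Real.exp (2*δ) * (lamW β W * (1 - lamW β W))) :=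
          mul_le_mul_of_nonneg_left hLAvg_ub (le_of_lt (Real.exp_pos _))
      _ = lamW β W * (1 - lamW β W) := by rw [← mul_assoc, hexpmul2, one_mul]
  · rw [div_le_iff₀ hLAvg_pos]
    calc lamW β W * (1 - lamW β W)
        = Real.exp (2*δ) * (Real.exp (-(2*δ)) * (lamW β W * (1 - lamW β W))) := by
          rw [← mul_assoc, mul_comm (Real.exp (2*δ)), hexpmul2, one_mul]
      _ ≤ Real.exp (2*δ) * LamAvg n r β :=
          mul_le_mul_of_nonneg_left hLAvg_lb (le_of_lt e2δ)
end

section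
/- Let β ∈ ℝ^n with max_{j,k} |β_j − β_k| ≤ δ/r for some δ ≥ 0, and suppose λ(β) ≤ 7/8. Then (e^{−δ}/256) λ(β) ≤ Λ(β) ≤ λ(β), where λ(β) and Λ(β) are the averages over all r-subsets W of λ_W(β) and of λ_W(β)(1−λ_W(β)) respectively. -/
theorem stmt7 (n r : ℕ) (hr : 1 ≤ r) (hrn : r ≤ n) (δ : ℝ) (hδ : 0 ≤ δ)
    (β : Fin n → ℝ) (hβ : ∀ j k, |β j - β k| ≤ δ / r)
    (hl : lamAvg n r β ≤ 7 / 8) :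
    Real.exp (-δ) / 256 * lamAvg n r β ≤ LamAvg n r β ∧ LamAvg n r β ≤ lamAvg n r β := by
  set S := Finset.powersetCard r (Finset.univ : Finset (Fin n)) with hSdef
  have hn : 1 ≤ n := le_trans hr hrn
  have hchoose : 0 < (n.choose r : ℝ) := by exact_mod_cast Nat.choose_pos hrn
  have hcardS : S.card = n.choose r := by
    simp [hSdef, Finset.card_powersetCard]
  have hSne : S.Nonempty := by
    rw [← Finset.card_pos, hcardS]; exact Nat.choose_pos hrn
  have hpos : ∀ W : Finset (Fin n), 0 < 1 + Real.exp (∑ j ∈ W, β j) := fun W => by positivity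
  have h0 : ∀ W, 0 ≤ lamW β W := fun W => div_nonneg (Real.exp_pos _).le (hpos W).le
  have h1 : ∀ W, lamW β W ≤ 1 := fun W => by
    rw [lamW, div_le_one (hpos W)]; linarith [Real.exp_pos (∑ j ∈ W, β j)]
  have hub : LamAvg n r β ≤ lamAvg n r β := by
    rw [LamAvg, lamAvg]
    refine mul_le_mul_of_nonneg_left (Finset.sum_le_sum fun W _ => ?_) (by positivity)
    nlinarith [h0 W, h1 W]
  refine ⟨?_, hub⟩
  -- max and min of β
  obtain ⟨jM, -, hjM⟩ := Finset.exists_max_image (Finset.univ : Finset (Fin n)) β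
    ⟨⟨0, hn⟩, Finset.mem_univ _⟩
  obtain ⟨jm, -, hjm⟩ := Finset.exists_min_image (Finset.univ : Finset (Fin n)) β
    ⟨⟨0, hn⟩, Finset.mem_univ _⟩
  have hMm : β jM - β jm ≤ δ / r := (abs_le.mp (hβ jM jm)).2
  -- a subset with small lamW
  have hsum' : ∑ W ∈ S, lamW β W ≤ ∑ W ∈ S, (7/8 : ℝ) := by
    rw [Finset.sum_const, hcardS, nsmul_eq_mul]
    rw [lamAvg, ← hSdef] at hl
    have h2 := mul_le_mul_of_nonneg_left hl hchoose.le
    rw [← mul_assoc, mul_inv_cancel₀ hchoose.ne', one_mul] at h2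
    linarith
  obtain ⟨W₀, hW₀S, hW₀⟩ := Finset.exists_le_of_sum_le hSne hsum'
  have he0 : Real.exp (∑ j ∈ W₀, β j) ≤ 7 := by
    have hp := hpos W₀
    rw [lamW, div_le_iff₀ hp] at hW₀
    linarith
  -- all subset sums within δ of s₀
  have hcard : ∀ W ∈ S, W.card = r := fun W hW =>
    (Finset.mem_powersetCard.mp hW).2
  have hsW : ∀ W ∈ S, ∑ j ∈ W, β j ≤ (∑ j ∈ W₀, β j) + δ := by
    intro W hW
    have h3 : ∑ j ∈ W, β j ≤ W.card • β jM :=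
      Finset.sum_le_card_nsmul W β (β jM) (fun j _ => hjM j (Finset.mem_univ j))
    have h4 : W₀.card • β jm ≤ ∑ j ∈ W₀, β j :=
      Finset.card_nsmul_le_sum W₀ β (β jm) (fun j _ => hjm j (Finset.mem_univ j))
    rw [hcard W hW, nsmul_eq_mul] at h3
    rw [hcard W₀ hW₀S, nsmul_eq_mul] at h4
    have hr0 : (0:ℝ) < r := by exact_mod_cast hr
    have hrδ : (r:ℝ) * (δ / r) = δ := by field_simp
    nlinarith [mul_le_mul_of_nonneg_left hMm hr0.le]
  -- per-W lower bound
  have hkey : ∀ W ∈ S, Real.exp (-δ) / 256 * lamW β W ≤ lamW β W * (1 - lamW β W) := by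
    intro W hW
    have hes : Real.exp (∑ j ∈ W, β j) ≤ 7 * Real.exp δ := by
      calc Real.exp (∑ j ∈ W, β j) ≤ Real.exp ((∑ j ∈ W₀, β j) + δ) :=
            Real.exp_le_exp.mpr (hsW W hW)
        _ = Real.exp (∑ j ∈ W₀, β j) * Real.exp δ := Real.exp_add _ _
        _ ≤ 7 * Real.exp δ := by
            have := Real.exp_pos δ
            nlinarith
    have heδ : (1:ℝ) ≤ Real.exp δ := Real.one_le_exp hδ
    have h8 : 1 + Real.exp (∑ j ∈ W, β j) ≤ 8 * Real.exp δ := by linarith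
    have hlam1 : 1 - lamW β W = 1 / (1 + Real.exp (∑ j ∈ W, β j)) := by
      rw [lamW]; field_simp; ring
    have hlow : Real.exp (-δ) / 256 ≤ 1 - lamW β W := by
      rw [hlam1, Real.exp_neg]
      rw [div_le_div_iff₀ (by positivity) (hpos W)]
      have h9 : (Real.exp δ)⁻¹ * (1 + Real.exp (∑ j ∈ W, β j)) ≤ (Real.exp δ)⁻¹ * (8 * Real.exp δ) :=
        mul_le_mul_of_nonneg_left h8 (by positivity)
      have h10 : (Real.exp δ)⁻¹ * (8 * Real.exp δ) = 8 := by field_simp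
      linarith
    calc Real.exp (-δ) / 256 * lamW β W ≤ (1 - lamW β W) * lamW β W :=
          mul_le_mul_of_nonneg_right hlow (h0 W)
      _ = lamW β W * (1 - lamW β W) := mul_comm _ _
  -- sum up
  have hsumkey : ∑ W ∈ S, Real.exp (-δ) / 256 * lamW β W ≤
      ∑ W ∈ S, lamW β W * (1 - lamW β W) := Finset.sum_le_sum hkey
  rw [← Finset.mul_sum] at hsumkey
  rw [LamAvg, lamAvg, ← hSdef]
  calc Real.exp (-δ) / 256 * ((n.choose r : ℝ)⁻¹ * ∑ W ∈ S, lamW β W)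
      = (n.choose r : ℝ)⁻¹ * (Real.exp (-δ) / 256 * ∑ W ∈ S, lamW β W) := by ring
    _ ≤ (n.choose r : ℝ)⁻¹ * ∑ W ∈ S, lamW β W * (1 - lamW β W) :=
        mul_le_mul_of_nonneg_left hsumkey (by positivity)
end

section
/- With A(β) as above and β satisfying max_{j,k} |β_j − β_k| ≤ δ/r, all entries satisfy: for j ≠ k and j′ ≠ k′, e^{−4δ/r} ≤ a_{jk}/a_{j′k′} ≤ e^{4δ/r}; for the diagonal, e^{−4δ/r} ≤ a_{jj}/a_{kk} ≤ e^{4δ/r}. Furthermore (1/2) e^{−4δ/r} Λ(β) binom(n−2,r−2) ≤ a_{jk} ≤ (1/2) e^{4δ/r} Λ(β) binom(n−2,r−2) for j ≠ k, and (1/2) e^{−4δ/r} Λ(β) binom(n−1,r−1) ≤ a_{jj} ≤ (1/2) e^{4δ/r} Λ(β) binom(n−1,r−1). -/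
noncomputable def matA (n r : ℕ) (β : Fin n → ℝ) : Matrix (Fin n) (Fin n) ℝ :=
  Matrix.of fun j k =>
    if j = k then
      (1 / 2) * ∑ W ∈ (Finset.powersetCard r (Finset.univ : Finset (Fin n))).filter
        (fun W => j ∈ W), lamW β W * (1 - lamW β W)
    else
      (1 / 2) * ∑ W ∈ (Finset.powersetCard r (Finset.univ : Finset (Fin n))).filter
        (fun W => j ∈ W ∧ k ∈ W), lamW β W * (1 - lamW β W)

/- ### auxiliary -/

noncomputable def Ffun (t : ℝ) : ℝ :=
  Real.exp t / (1 + Real.exp t) * (1 - Real.exp t / (1 + Real.exp t))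

noncomputable def Gfun (t : ℝ) : ℝ := Real.exp (t/2) + Real.exp (-(t/2))

lemma Gfun_pos (t : ℝ) : 0 < Gfun t := by unfold Gfun; positivity

lemma Ffun_eq (t : ℝ) : Ffun t = ((Gfun t)^2)⁻¹ := by
  have hxe : Real.exp t = Real.exp (t/2) * Real.exp (t/2) := by
    rw [← Real.exp_add]; ring_nf
  have hxn : Real.exp (-(t/2)) = (Real.exp (t/2))⁻¹ := Real.exp_neg _
  have hx0 : 0 < Real.exp (t/2) := Real.exp_pos _
  have h1 : (0:ℝ) < 1 + Real.exp t := by positivity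
  rw [Ffun, Gfun, hxe, hxn]
  have hne : Real.exp (t/2) ≠ 0 := ne_of_gt hx0
  have hne2 : 1 + Real.exp (t/2) * Real.exp (t/2) ≠ 0 := by positivity
  field_simp
  ring

lemma Ffun_pos (t : ℝ) : 0 < Ffun t := by
  rw [Ffun_eq]; have := Gfun_pos t; positivity

lemma Ffun_ratio {s t c : ℝ} (h : |s - t| ≤ c) : Ffun s ≤ Real.exp c * Ffun t := by
  rw [abs_sub_le_iff] at h
  have hgs := Gfun_pos s
  have hgt := Gfun_pos t
  have key : Gfun t ≤ Real.exp (c/2) * Gfun s := by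
    have a1 : Real.exp (t/2) ≤ Real.exp (c/2) * Real.exp (s/2) := by
      rw [← Real.exp_add]; apply Real.exp_le_exp.2; linarith [h.2]
    have a2 : Real.exp (-(t/2)) ≤ Real.exp (c/2) * Real.exp (-(s/2)) := by
      rw [← Real.exp_add]; apply Real.exp_le_exp.2; linarith [h.1]
    unfold Gfun at *; linarith
  have key2 : (Gfun t)^2 ≤ Real.exp c * (Gfun s)^2 := by
    have hm := mul_le_mul key key (le_of_lt hgt) (by positivity)
    calc (Gfun t)^2 = Gfun t * Gfun t := by ring
      _ ≤ (Real.exp (c/2) * Gfun s) * (Real.exp (c/2) * Gfun s) := hm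
      _ = Real.exp c * (Gfun s)^2 := by
          rw [show Real.exp c = Real.exp (c/2) * Real.exp (c/2) from by rw [← Real.exp_add]; ring_nf]
          ring
  rw [Ffun_eq, Ffun_eq, ← one_div, ← div_eq_mul_inv,
    div_le_div_iff₀ (by positivity) (by positivity)]
  linarith

lemma exp_flip {c x y : ℝ} (h : x ≤ Real.exp c * y) : Real.exp (-c) * x ≤ y := by
  have h2 : Real.exp (-c) * Real.exp c = 1 := by rw [← Real.exp_add]; simp
  have h3 := mul_le_mul_of_nonneg_left h (Real.exp_pos (-c)).le
  calc Real.exp (-c) * x ≤ Real.exp (-c) * (Real.exp c * y) := h3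
    _ = y := by rw [← mul_assoc, h2, one_mul]

lemma ratio_bounds {x y c : ℝ} (hy : 0 < y)
    (h1 : x ≤ Real.exp c * y) (h2 : y ≤ Real.exp c * x) :
    Real.exp (-c) ≤ x / y ∧ x / y ≤ Real.exp c := by
  constructor
  · rw [le_div_iff₀ hy]
    exact exp_flip h2
  · rw [div_le_iff₀ hy, mul_comm]
    exact h1.trans_eq (mul_comm _ _)

lemma exists_perm {n : ℕ} (j k j' k' : Fin n) (hjk : j ≠ k) (h2 : j' ≠ k') :
    ∃ σ : Equiv.Perm (Fin n), σ j = j' ∧ σ k = k' ∧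
      ∀ i, i ≠ j → i ≠ k → i ≠ j' → i ≠ k' → σ i = i := by
  by_cases hkj' : k = j'
  · subst hkj'
    by_cases hjk' : j = k'
    · subst hjk'
      exact ⟨Equiv.swap j k, Equiv.swap_apply_left _ _, Equiv.swap_apply_right _ _,
        fun i h1 h3 _ _ => Equiv.swap_apply_of_ne_of_ne h1 h3⟩
    · refine ⟨(Equiv.swap j k).trans (Equiv.swap j k'), ?_, ?_, ?_⟩
      · rw [Equiv.trans_apply, Equiv.swap_apply_left,
          Equiv.swap_apply_of_ne_of_ne (Ne.symm hjk) h2]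
      · rw [Equiv.trans_apply, Equiv.swap_apply_right, Equiv.swap_apply_left]
      · intro i h1 h3 _ h5
        rw [Equiv.trans_apply, Equiv.swap_apply_of_ne_of_ne h1 h3,
          Equiv.swap_apply_of_ne_of_ne h1 h5]
  · refine ⟨(Equiv.swap j j').trans (Equiv.swap k k'), ?_, ?_, ?_⟩
    · rw [Equiv.trans_apply, Equiv.swap_apply_left,
        Equiv.swap_apply_of_ne_of_ne (fun h => hkj' h.symm) h2]
    · rw [Equiv.trans_apply, Equiv.swap_apply_of_ne_of_ne (Ne.symm hjk) hkj',
        Equiv.swap_apply_left]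
    · intro i h1 h3 h4 h5
      rw [Equiv.trans_apply, Equiv.swap_apply_of_ne_of_ne h1 h4,
        Equiv.swap_apply_of_ne_of_ne h3 h5]

lemma sum_diff_le {n : ℕ} (β : Fin n → ℝ) (d : ℝ) (hd : 0 ≤ d)
    (hβ : ∀ j k : Fin n, |β j - β k| ≤ d) (σ : Equiv.Perm (Fin n)) (a b c e : Fin n)
    (hfix : ∀ i, i ≠ a → i ≠ b → i ≠ c → i ≠ e → σ i = i) (W : Finset (Fin n)) :
    |∑ i ∈ W, β i - ∑ i ∈ W, β (σ i)| ≤ 4 * d := by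
  classical
  rw [← Finset.sum_sub_distrib,
    ← Finset.sum_filter_of_ne (p := fun i => β i - β (σ i) ≠ 0) (fun x _ h => h)]
  set D := W.filter (fun i => β i - β (σ i) ≠ 0) with hD
  have hsub : D ⊆ ({a, b, c, e} : Finset (Fin n)) := by
    intro i hi
    simp only [hD, Finset.mem_filter] at hi
    by_contra hmem
    simp only [Finset.mem_insert, Finset.mem_singleton] at hmem
    push_neg at hmem
    have := hfix i hmem.1 hmem.2.1 hmem.2.2.1 hmem.2.2.2
    rw [this] at hi
    simp at hi
  have hcard : (D.card : ℝ) ≤ 4 := by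
    have h1 : D.card ≤ ({a,b,c,e} : Finset (Fin n)).card := Finset.card_le_card hsub
    have h2 : ({a,b,c,e} : Finset (Fin n)).card ≤ 4 := by
      have i1 := Finset.card_insert_le a ({b,c,e} : Finset (Fin n))
      have i2 := Finset.card_insert_le b ({c,e} : Finset (Fin n))
      have i3 := Finset.card_insert_le c ({e} : Finset (Fin n))
      have i4 : ({e} : Finset (Fin n)).card = 1 := Finset.card_singleton e
      omega
    exact_mod_cast le_trans h1 h2
  calc |∑ i ∈ D, (β i - β (σ i))| ≤ ∑ i ∈ D, |β i - β (σ i)| :=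
        Finset.abs_sum_le_sum_abs _ _
    _ ≤ ∑ i ∈ D, d := Finset.sum_le_sum (fun i _ => hβ i (σ i))
    _ = (D.card : ℝ) * d := by rw [Finset.sum_const, nsmul_eq_mul]
    _ ≤ 4 * d := mul_le_mul_of_nonneg_right hcard hd

lemma filter_sum_comp {n : ℕ} (r : ℕ) (β : Fin n → ℝ) (d : ℝ) (hd : 0 ≤ d)
    (hβ : ∀ j k : Fin n, |β j - β k| ≤ d) (σ : Equiv.Perm (Fin n)) (a b c e : Fin n)
    (hfix : ∀ i, i ≠ a → i ≠ b → i ≠ c → i ≠ e → σ i = i)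
    (p q : Finset (Fin n) → Prop) [DecidablePred p] [DecidablePred q]
    (hpq : ∀ W, p W → q (W.image σ)) (hqp : ∀ W, q W → p (W.image σ.symm)) :
    ∑ W ∈ (Finset.powersetCard r (Finset.univ : Finset (Fin n))).filter p,
        Ffun (∑ i ∈ W, β i) ≤
      Real.exp (4 * d) * ∑ W ∈ (Finset.powersetCard r
        (Finset.univ : Finset (Fin n))).filter q, Ffun (∑ i ∈ W, β i) := by
  classical
  have hinj : Function.Injective σ := σ.injective
  have key : ∀ W ∈ (Finset.powersetCard r (Finset.univ : Finset (Fin n))).filter p,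
      Ffun (∑ i ∈ W, β i) ≤ Real.exp (4*d) * Ffun (∑ i ∈ W.image σ, β i) := by
    intro W _
    have hs : ∑ i ∈ W.image σ, β i = ∑ i ∈ W, β (σ i) :=
      Finset.sum_image (fun x _ y _ h => hinj h)
    rw [hs]
    exact Ffun_ratio (sum_diff_le β d hd hβ σ a b c e hfix W)
  calc ∑ W ∈ (Finset.powersetCard r (Finset.univ : Finset (Fin n))).filter p,
        Ffun (∑ i ∈ W, β i)
      ≤ ∑ W ∈ (Finset.powersetCard r (Finset.univ : Finset (Fin n))).filter p,
        Real.exp (4*d) * Ffun (∑ i ∈ W.image σ, β i) := Finset.sum_le_sum key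
    _ = Real.exp (4*d) * ∑ W ∈ (Finset.powersetCard r
        (Finset.univ : Finset (Fin n))).filter p, Ffun (∑ i ∈ W.image σ, β i) := by
        rw [Finset.mul_sum]
    _ = Real.exp (4*d) * ∑ W ∈ (Finset.powersetCard r
        (Finset.univ : Finset (Fin n))).filter q, Ffun (∑ i ∈ W, β i) := by
        congr 1
        refine Finset.sum_nbij' (fun W => W.image σ) (fun W => W.image σ.symm)
          ?_ ?_ ?_ ?_ ?_
        · intro W hW
          simp only [Finset.mem_filter, Finset.mem_powersetCard_univ] at *
          exact ⟨by rw [Finset.card_image_of_injective _ hinj]; exact hW.1, hpq W hW.2⟩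
        · intro W hW
          simp only [Finset.mem_filter, Finset.mem_powersetCard_univ] at *
          exact ⟨by rw [Finset.card_image_of_injective _ σ.symm.injective]; exact hW.1,
            hqp W hW.2⟩
        · intro W _
          ext x
          simp
        · intro W _
          ext x
          simp
        · intro W _
          rfl

lemma sum_filter_pos {n r : ℕ} (β : Fin n → ℝ) (s : Finset (Fin n)) (hs : s.card ≤ r)
    (hrn : r ≤ n) (p : Finset (Fin n) → Prop) [DecidablePred p]
    (hp : ∀ W, s ⊆ W → p W) :
    0 < ∑ W ∈ (Finset.powersetCard r (Finset.univ : Finset (Fin n))).filter p,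
        Ffun (∑ i ∈ W, β i) := by
  obtain ⟨u, hsu, -, hcard⟩ := Finset.exists_subsuperset_card_eq (Finset.subset_univ s)
    hs (by simpa using hrn)
  refine Finset.sum_pos (fun W _ => Ffun_pos _) ⟨u, ?_⟩
  simp only [Finset.mem_filter, Finset.mem_powersetCard_univ]
  exact ⟨hcard, hp u hsu⟩

lemma count_diag (n r : ℕ) (β : Fin n → ℝ) :
    ∑ j : Fin n, ∑ W ∈ (Finset.powersetCard r (Finset.univ : Finset (Fin n))).filter
      (fun W => j ∈ W), Ffun (∑ i ∈ W, β i)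
    = (r:ℝ) * ∑ W ∈ Finset.powersetCard r (Finset.univ : Finset (Fin n)),
        Ffun (∑ i ∈ W, β i) := by
  simp_rw [Finset.sum_filter]
  rw [Finset.sum_comm, Finset.mul_sum]
  refine Finset.sum_congr rfl fun W hW => ?_
  rw [Finset.sum_ite_mem, Finset.univ_inter, Finset.sum_const, nsmul_eq_mul,
    Finset.mem_powersetCard_univ.mp hW]

lemma count_off (n r : ℕ) (β : Fin n → ℝ) :
    ∑ j : Fin n, ∑ k ∈ Finset.univ.erase j,
      ∑ W ∈ (Finset.powersetCard r (Finset.univ : Finset (Fin n))).filter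
        (fun W => j ∈ W ∧ k ∈ W), Ffun (∑ i ∈ W, β i)
    = ((r * (r-1) : ℕ) : ℝ) * ∑ W ∈ Finset.powersetCard r (Finset.univ : Finset (Fin n)),
        Ffun (∑ i ∈ W, β i) := by
  simp_rw [Finset.sum_filter]
  rw [Finset.sum_congr rfl fun j _ => Finset.sum_comm, Finset.sum_comm, Finset.mul_sum]
  refine Finset.sum_congr rfl fun W hW => ?_
  have hcard : W.card = r := Finset.mem_powersetCard_univ.mp hW
  rw [← Finset.sum_subset (Finset.subset_univ W) (by
    intro x _ hx
    simp [hx])]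
  have hterm : ∀ j ∈ W, (∑ k ∈ Finset.univ.erase j,
      if j ∈ W ∧ k ∈ W then Ffun (∑ i ∈ W, β i) else 0)
      = ((r - 1 : ℕ) : ℝ) * Ffun (∑ i ∈ W, β i) := by
    intro j hj
    have : ∀ k, (j ∈ W ∧ k ∈ W) = (k ∈ W) := fun k => by simp [hj]
    simp_rw [this]
    rw [Finset.sum_ite_mem]
    have hint : (Finset.univ.erase j) ∩ W = W.erase j := by
      ext x; simp [Finset.mem_erase, and_comm]
    rw [hint, Finset.sum_const, nsmul_eq_mul, Finset.card_erase_of_mem hj, hcard]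
  rw [Finset.sum_congr rfl hterm, Finset.sum_const, nsmul_eq_mul, hcard]
  push_cast
  ring

lemma nat_id1 (n r : ℕ) (h1 : 1 ≤ r) (hrn : r ≤ n) :
    n * (n-1).choose (r-1) = r * n.choose r := by
  obtain ⟨n', rfl⟩ : ∃ m, n = m + 1 := ⟨n-1, by omega⟩
  obtain ⟨r', rfl⟩ : ∃ m, r = m + 1 := ⟨r-1, by omega⟩
  simp only [Nat.add_sub_cancel]
  rw [Nat.add_one_mul_choose_eq]
  exact Nat.mul_comm _ _

lemma nat_id2 (n r : ℕ) (h2 : 2 ≤ r) (hrn : r ≤ n) :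
    r * (r-1) * n.choose r = n * (n-1) * (n-2).choose (r-2) := by
  have e1 := nat_id1 n r (by omega) hrn
  have e2 := nat_id1 (n-1) (r-1) (by omega) (by omega)
  have h3 : n - 1 - 1 = n - 2 := by omega
  have h4 : r - 1 - 1 = r - 2 := by omega
  rw [h3, h4] at e2
  calc r * (r-1) * n.choose r = (r-1) * (r * n.choose r) := by ring
    _ = (r-1) * (n * (n-1).choose (r-1)) := by rw [e1]
    _ = n * ((r-1) * (n-1).choose (r-1)) := by ring
    _ = n * ((n-1) * (n-2).choose (r-2)) := by rw [← e2]
    _ = n * (n-1) * (n-2).choose (r-2) := by ring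

lemma matA_off {n : ℕ} (r : ℕ) (β : Fin n → ℝ) {j k : Fin n} (h : j ≠ k) :
    matA n r β j k = (1/2) * ∑ W ∈ (Finset.powersetCard r
      (Finset.univ : Finset (Fin n))).filter (fun W => j ∈ W ∧ k ∈ W),
      Ffun (∑ i ∈ W, β i) := by
  simp only [matA, Matrix.of_apply, if_neg h]
  rfl

lemma matA_diag {n : ℕ} (r : ℕ) (β : Fin n → ℝ) (j : Fin n) :
    matA n r β j j = (1/2) * ∑ W ∈ (Finset.powersetCard r
      (Finset.univ : Finset (Fin n))).filter (fun W => j ∈ W),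
      Ffun (∑ i ∈ W, β i) := by
  simp only [matA, Matrix.of_apply, if_pos rfl]
  rfl

lemma bound_from_count {S T Cnr Cn2 NN RR c : ℝ} (hT : 0 ≤ T)
    (hCnr : 0 < Cnr) (hCn2 : 0 ≤ Cn2) (hNN : 0 ≤ NN) (hRR : 0 < RR)
    (hid : RR * Cnr = NN * Cn2)
    (hub : RR * T ≤ NN * (Real.exp c * S))
    (hlb : NN * (Real.exp (-c) * S) ≤ RR * T) :
    (1/2) * Real.exp (-c) * (Cnr⁻¹ * T) * Cn2 ≤ (1/2) * S ∧
    (1/2) * S ≤ (1/2) * Real.exp c * (Cnr⁻¹ * T) * Cn2 := by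
  have hexp1 : Real.exp (-c) * Real.exp c = 1 := by rw [← Real.exp_add]; simp
  have key1 : Real.exp (-c) * T * Cn2 ≤ Cnr * S := by
    refine le_of_mul_le_mul_left ?_ hRR
    calc RR * (Real.exp (-c) * T * Cn2) = (Real.exp (-c) * Cn2) * (RR * T) := by ring
      _ ≤ (Real.exp (-c) * Cn2) * (NN * (Real.exp c * S)) :=
          mul_le_mul_of_nonneg_left hub (mul_nonneg (Real.exp_pos _).le hCn2)
      _ = (NN * Cn2) * (Real.exp (-c) * Real.exp c) * S := by ring
      _ = (RR * Cnr) * 1 * S := by rw [hexp1, hid]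
      _ = RR * (Cnr * S) := by ring
  have key2 : Cnr * S ≤ Real.exp c * T * Cn2 := by
    refine le_of_mul_le_mul_left ?_ hRR
    calc RR * (Cnr * S) = (NN * Cn2) * S := by rw [← mul_assoc, hid]
      _ = (Real.exp c * Cn2) * (NN * (Real.exp (-c) * S)) := by
          rw [show (Real.exp c * Cn2) * (NN * (Real.exp (-c) * S))
            = (NN * Cn2) * S * (Real.exp (-c) * Real.exp c) from by ring, hexp1, mul_one]
      _ ≤ (Real.exp c * Cn2) * (RR * T) :=
          mul_le_mul_of_nonneg_left hlb (mul_nonneg (Real.exp_pos _).le hCn2)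
      _ = RR * (Real.exp c * T * Cn2) := by ring
  have hCnr' : Cnr ≠ 0 := ne_of_gt hCnr
  constructor
  · calc (1/2) * Real.exp (-c) * (Cnr⁻¹ * T) * Cn2
        = (Real.exp (-c) * T * Cn2) * (2⁻¹ * Cnr⁻¹) := by ring
      _ ≤ (Cnr * S) * (2⁻¹ * Cnr⁻¹) :=
          mul_le_mul_of_nonneg_right key1 (by positivity)
      _ = (1/2) * S := by field_simp
  · calc (1/2) * S = (Cnr * S) * (2⁻¹ * Cnr⁻¹) := by field_simp
      _ ≤ (Real.exp c * T * Cn2) * (2⁻¹ * Cnr⁻¹) :=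
          mul_le_mul_of_nonneg_right key2 (by positivity)
      _ = (1/2) * Real.exp c * (Cnr⁻¹ * T) * Cn2 := by ring

theorem stmt10 (n r : ℕ) (hr : 2 ≤ r) (hrn : r ≤ n) (δ : ℝ) (hδ : 0 ≤ δ)
    (β : Fin n → ℝ) (hβ : ∀ j k, |β j - β k| ≤ δ / r) :
    (∀ j k j' k' : Fin n, j ≠ k → j' ≠ k' →
      Real.exp (-(4 * δ / r)) ≤ matA n r β j k / matA n r β j' k' ∧
      matA n r β j k / matA n r β j' k' ≤ Real.exp (4 * δ / r)) ∧
    (∀ j k : Fin n,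
      Real.exp (-(4 * δ / r)) ≤ matA n r β j j / matA n r β k k ∧
      matA n r β j j / matA n r β k k ≤ Real.exp (4 * δ / r)) ∧
    (∀ j k : Fin n, j ≠ k →
      (1 / 2) * Real.exp (-(4 * δ / r)) * LamAvg n r β * ((n - 2).choose (r - 2) : ℝ) ≤
        matA n r β j k ∧
      matA n r β j k ≤
        (1 / 2) * Real.exp (4 * δ / r) * LamAvg n r β * ((n - 2).choose (r - 2) : ℝ)) ∧
    (∀ j : Fin n,
      (1 / 2) * Real.exp (-(4 * δ / r)) * LamAvg n r β * ((n - 1).choose (r - 1) : ℝ) ≤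
        matA n r β j j ∧
      matA n r β j j ≤
        (1 / 2) * Real.exp (4 * δ / r) * LamAvg n r β * ((n - 1).choose (r - 1) : ℝ)) := by
  have hd : (0:ℝ) ≤ δ / r := div_nonneg hδ (Nat.cast_nonneg r)
  have hc4 : (4:ℝ) * δ / (r:ℝ) = 4 * (δ / r) := mul_div_assoc 4 δ (r:ℝ)
  -- pairwise comparison of off-diagonal sums
  have hcomp : ∀ a b a' b' : Fin n, a ≠ b → a' ≠ b' →
      (∑ W ∈ (Finset.powersetCard r (Finset.univ : Finset (Fin n))).filter
        (fun W => a ∈ W ∧ b ∈ W), Ffun (∑ i ∈ W, β i)) ≤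
      Real.exp (4 * δ / r) * ∑ W ∈ (Finset.powersetCard r
        (Finset.univ : Finset (Fin n))).filter
        (fun W => a' ∈ W ∧ b' ∈ W), Ffun (∑ i ∈ W, β i) := by
    intro a b a' b' hab ha'b'
    obtain ⟨σ, hσ1, hσ2, hfix⟩ := exists_perm a b a' b' hab ha'b'
    rw [hc4]
    refine filter_sum_comp r β (δ/r) hd hβ σ a b a' b' hfix _ _ ?_ ?_
    · intro W hW
      constructor
      · have := Finset.mem_image_of_mem σ hW.1; rwa [hσ1] at this
      · have := Finset.mem_image_of_mem σ hW.2; rwa [hσ2] at this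
    · intro W hW
      constructor
      · have h := Finset.mem_image_of_mem σ.symm hW.1
        rwa [show σ.symm a' = a from by rw [← hσ1, Equiv.symm_apply_apply]] at h
      · have h := Finset.mem_image_of_mem σ.symm hW.2
        rwa [show σ.symm b' = b from by rw [← hσ2, Equiv.symm_apply_apply]] at h
  -- pairwise comparison of diagonal sums
  have hdcomp : ∀ a b : Fin n,
      (∑ W ∈ (Finset.powersetCard r (Finset.univ : Finset (Fin n))).filter
        (fun W => a ∈ W), Ffun (∑ i ∈ W, β i)) ≤
      Real.exp (4 * δ / r) * ∑ W ∈ (Finset.powersetCard r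
        (Finset.univ : Finset (Fin n))).filter
        (fun W => b ∈ W), Ffun (∑ i ∈ W, β i) := by
    intro a b
    rw [hc4]
    refine filter_sum_comp r β (δ/r) hd hβ (Equiv.swap a b) a b a b
      (fun i h1 h3 _ _ => Equiv.swap_apply_of_ne_of_ne h1 h3) _ _ ?_ ?_
    · intro W hW
      have := Finset.mem_image_of_mem (Equiv.swap a b) hW
      rwa [Equiv.swap_apply_left] at this
    · intro W hW
      have := Finset.mem_image_of_mem (Equiv.swap a b).symm hW
      rwa [Equiv.symm_swap, Equiv.swap_apply_right] at this
  -- positivity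
  have hopos : ∀ a b : Fin n, a ≠ b →
      0 < ∑ W ∈ (Finset.powersetCard r (Finset.univ : Finset (Fin n))).filter
        (fun W => a ∈ W ∧ b ∈ W), Ffun (∑ i ∈ W, β i) := by
    intro a b hab
    refine sum_filter_pos β {a, b} ?_ hrn _ ?_
    · rw [Finset.card_insert_of_notMem (by simp [hab]), Finset.card_singleton]
      exact hr
    · intro W hsub
      exact ⟨hsub (by simp), hsub (by simp)⟩
  have hdpos : ∀ a : Fin n,
      0 < ∑ W ∈ (Finset.powersetCard r (Finset.univ : Finset (Fin n))).filter
        (fun W => a ∈ W), Ffun (∑ i ∈ W, β i) := by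
    intro a
    refine sum_filter_pos β {a} ?_ hrn _ ?_
    · rw [Finset.card_singleton]; omega
    · intro W hsub; exact hsub (by simp)
  have hTnonneg : (0:ℝ) ≤ ∑ W ∈ Finset.powersetCard r (Finset.univ : Finset (Fin n)),
      Ffun (∑ i ∈ W, β i) := Finset.sum_nonneg fun W _ => (Ffun_pos _).le
  have hCpos : (0:ℝ) < (n.choose r : ℝ) := by exact_mod_cast Nat.choose_pos hrn
  refine ⟨?_, ?_, ?_, ?_⟩
  -- part 1
  · intro j k j' k' hjk h2'
    rw [matA_off r β hjk, matA_off r β h2']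
    have hx := hopos j k hjk
    have hy := hopos j' k' h2'
    have h1 := hcomp j k j' k' hjk h2'
    have h2 := hcomp j' k' j k h2' hjk
    exact ratio_bounds (by linarith) (by linarith) (by linarith)
  -- part 2
  · intro j k
    rw [matA_diag r β j, matA_diag r β k]
    have hx := hdpos j
    have hy := hdpos k
    have h1 := hdcomp j k
    have h2 := hdcomp k j
    exact ratio_bounds (by linarith) (by linarith) (by linarith)
  -- part 3
  · intro j k hjk
    rw [matA_off r β hjk,
      show LamAvg n r β = ((n.choose r : ℝ))⁻¹ *
        ∑ W ∈ Finset.powersetCard r (Finset.univ : Finset (Fin n)),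
          Ffun (∑ i ∈ W, β i) from rfl]
    have hrr : (0:ℝ) < ((r * (r-1) : ℕ) : ℝ) := by
      have : 0 < r * (r - 1) := Nat.mul_pos (by omega) (by omega)
      exact_mod_cast this
    have hid3 : ((r * (r-1) : ℕ) : ℝ) * (n.choose r : ℝ)
        = ((n:ℝ) * ((n-1 : ℕ):ℝ)) * ((n-2).choose (r-2) : ℝ) := by
      exact_mod_cast nat_id2 n r hr hrn
    have hconst : ∀ x : ℝ, (∑ _j' : Fin n, ∑ _k' ∈ Finset.univ.erase _j', x)
        = ((n:ℝ) * ((n-1 : ℕ):ℝ)) * x := by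
      intro x
      simp only [Finset.sum_const, nsmul_eq_mul, Finset.card_erase_of_mem (Finset.mem_univ _),
        Finset.card_univ, Fintype.card_fin]
      ring
    have hub3 : ((r * (r-1) : ℕ) : ℝ) *
        (∑ W ∈ Finset.powersetCard r (Finset.univ : Finset (Fin n)), Ffun (∑ i ∈ W, β i))
        ≤ ((n:ℝ) * ((n-1 : ℕ):ℝ)) * (Real.exp (4 * δ / r) *
          ∑ W ∈ (Finset.powersetCard r (Finset.univ : Finset (Fin n))).filter
            (fun W => j ∈ W ∧ k ∈ W), Ffun (∑ i ∈ W, β i)) := by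
      rw [← count_off n r β, ← hconst]
      refine Finset.sum_le_sum fun j' _ => Finset.sum_le_sum fun k' hk' => ?_
      exact hcomp j' k' j k (Ne.symm (Finset.mem_erase.mp hk').1) hjk
    have hlb3 : ((n:ℝ) * ((n-1 : ℕ):ℝ)) * (Real.exp (-(4 * δ / r)) *
          ∑ W ∈ (Finset.powersetCard r (Finset.univ : Finset (Fin n))).filter
            (fun W => j ∈ W ∧ k ∈ W), Ffun (∑ i ∈ W, β i))
        ≤ ((r * (r-1) : ℕ) : ℝ) *
        (∑ W ∈ Finset.powersetCard r (Finset.univ : Finset (Fin n)), Ffun (∑ i ∈ W, β i)) := by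
      rw [← count_off n r β, ← hconst]
      refine Finset.sum_le_sum fun j' _ => Finset.sum_le_sum fun k' hk' => ?_
      exact exp_flip (hcomp j k j' k' hjk (Ne.symm (Finset.mem_erase.mp hk').1))
    exact bound_from_count hTnonneg hCpos (Nat.cast_nonneg _)
      (by positivity) hrr hid3 hub3 hlb3
  -- part 4
  · intro j
    rw [matA_diag r β j,
      show LamAvg n r β = ((n.choose r : ℝ))⁻¹ *
        ∑ W ∈ Finset.powersetCard r (Finset.univ : Finset (Fin n)),
          Ffun (∑ i ∈ W, β i) from rfl]
    have hrpos : (0:ℝ) < (r:ℝ) := by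
      have : 0 < r := by omega
      exact_mod_cast this
    have hid4 : (r:ℝ) * (n.choose r : ℝ) = (n:ℝ) * ((n-1).choose (r-1) : ℝ) := by
      exact_mod_cast (nat_id1 n r (by omega) hrn).symm
    have hconst : ∀ x : ℝ, (∑ _j' : Fin n, x) = (n:ℝ) * x := by
      intro x
      simp [Finset.sum_const, Finset.card_univ]
    have hub4 : (r:ℝ) *
        (∑ W ∈ Finset.powersetCard r (Finset.univ : Finset (Fin n)), Ffun (∑ i ∈ W, β i))
        ≤ (n:ℝ) * (Real.exp (4 * δ / r) *
          ∑ W ∈ (Finset.powersetCard r (Finset.univ : Finset (Fin n))).filter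
            (fun W => j ∈ W), Ffun (∑ i ∈ W, β i)) := by
      rw [← count_diag n r β, ← hconst]
      exact Finset.sum_le_sum fun j' _ => hdcomp j' j
    have hlb4 : (n:ℝ) * (Real.exp (-(4 * δ / r)) *
          ∑ W ∈ (Finset.powersetCard r (Finset.univ : Finset (Fin n))).filter
            (fun W => j ∈ W), Ffun (∑ i ∈ W, β i))
        ≤ (r:ℝ) *
        (∑ W ∈ Finset.powersetCard r (Finset.univ : Finset (Fin n)), Ffun (∑ i ∈ W, β i)) := by
      rw [← count_diag n r β, ← hconst]
      exact Finset.sum_le_sum fun j' _ => exp_flip (hdcomp j j')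
    exact bound_from_count hTnonneg hCpos (Nat.cast_nonneg _)
      (Nat.cast_nonneg _) hrpos hid4 hub4 hlb4
end

section
/- Quadratic form identity: for any β ∈ ℝ^n and any x ∈ ℝ^n, x^T A(β) x = (1/2) ∑_{W ∈ S_r(n)} λ_W(β)(1−λ_W(β)) (∑_{j∈W} x_j)^2. In particular A(β) is positive semidefinite. -/
lemma matA_apply (n r : ℕ) (β : Fin n → ℝ) (j k : Fin n) :
    matA n r β j k = (1 / 2) * ∑ W ∈ Finset.powersetCard r (Finset.univ : Finset (Fin n)),
      (if j ∈ W ∧ k ∈ W then lamW β W * (1 - lamW β W) else 0) := by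
  by_cases h : j = k
  · subst h
    simp [matA, Finset.sum_filter, and_self]
  · simp [matA, h, Finset.sum_filter]

lemma lam_nonneg {n : ℕ} (β : Fin n → ℝ) (W : Finset (Fin n)) :
    0 ≤ lamW β W * (1 - lamW β W) := by
  unfold lamW
  set e := Real.exp (∑ j ∈ W, β j) with he
  have h1 : 0 < e := Real.exp_pos _
  have h2 : 0 < 1 + e := by linarith
  have h3 : e / (1 + e) < 1 := by rw [div_lt_one h2]; linarith
  have h4 : 0 < e / (1 + e) := div_pos h1 h2
  nlinarith

open Matrix in
theorem stmt12 (n r : ℕ) (hr : 2 ≤ r) (hrn : r ≤ n) (β : Fin n → ℝ) :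
    (∀ x : Fin n → ℝ,
      x ⬝ᵥ (matA n r β).mulVec x =
        (1 / 2) * ∑ W ∈ Finset.powersetCard r (Finset.univ : Finset (Fin n)),
          lamW β W * (1 - lamW β W) * (∑ j ∈ W, x j) ^ 2) ∧
    (matA n r β).PosSemidef := by
  set S := Finset.powersetCard r (Finset.univ : Finset (Fin n)) with hS
  have key : ∀ x : Fin n → ℝ,
      x ⬝ᵥ (matA n r β).mulVec x =
        (1 / 2) * ∑ W ∈ S, lamW β W * (1 - lamW β W) * (∑ j ∈ W, x j) ^ 2 := by
    intro x
    calc x ⬝ᵥ (matA n r β).mulVec x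
        = ∑ j, ∑ k, ∑ W ∈ S,
            (if j ∈ W then x j else 0) * (if k ∈ W then x k else 0) *
              ((1 / 2) * (lamW β W * (1 - lamW β W))) := by
          simp only [dotProduct, Matrix.mulVec, dotProduct]
          refine Finset.sum_congr rfl fun j _ => ?_
          rw [Finset.mul_sum]
          refine Finset.sum_congr rfl fun k _ => ?_
          rw [matA_apply, Finset.mul_sum, Finset.sum_mul, Finset.mul_sum]
          refine Finset.sum_congr rfl fun W _ => ?_
          by_cases h1 : j ∈ W <;> by_cases h2 : k ∈ W <;> simp [h1, h2] <;> ring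
      _ = ∑ W ∈ S, ∑ j, ∑ k,
            (if j ∈ W then x j else 0) * (if k ∈ W then x k else 0) *
              ((1 / 2) * (lamW β W * (1 - lamW β W))) := by
          rw [Finset.sum_congr rfl fun j (_ : j ∈ Finset.univ) => Finset.sum_comm,
            Finset.sum_comm]
      _ = (1 / 2) * ∑ W ∈ S, lamW β W * (1 - lamW β W) * (∑ j ∈ W, x j) ^ 2 := by
          rw [Finset.mul_sum]
          refine Finset.sum_congr rfl fun W _ => ?_
          have h1 : (∑ j, if j ∈ W then x j else 0) = ∑ j ∈ W, x j := by
            simp [Finset.sum_ite_mem]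
          calc (∑ j, ∑ k, (if j ∈ W then x j else 0) * (if k ∈ W then x k else 0) *
                  ((1 / 2) * (lamW β W * (1 - lamW β W))))
              = (∑ j, if j ∈ W then x j else 0) * (∑ k, if k ∈ W then x k else 0) *
                  ((1 / 2) * (lamW β W * (1 - lamW β W))) := by
                rw [Finset.sum_mul_sum, Finset.sum_mul]
                exact Finset.sum_congr rfl fun j _ => by rw [Finset.sum_mul]
            _ = _ := by rw [h1]; ring
  refine ⟨key, Matrix.posSemidef_iff_dotProduct_mulVec.mpr ⟨?_, ?_⟩⟩
  · ext j k
    rw [Matrix.conjTranspose_apply, matA_apply, matA_apply]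
    simp [and_comm]
  · intro x
    rw [show star x = x from rfl, key x]
    refine mul_nonneg (by norm_num) (Finset.sum_nonneg fun W _ =>
      mul_nonneg (lam_nonneg β W) (sq_nonneg _))
end

section
/- For any t ∈ ℝ and λ ∈ [0,1], |1 + λ(e^{it} − 1)| ≤ exp( −(1/2)(1 − t²/12) λ(1−λ) t² ). -/
lemma aux_sin_lb (x : ℝ) (hx : 0 ≤ x) : x - x ^ 3 / 6 ≤ Real.sin x := by
  have key : MonotoneOn (fun x : ℝ => Real.sin x - x + x ^ 3 / 6) (Set.Ici 0) := by
    apply monotoneOn_of_deriv_nonneg (convex_Ici 0)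
    · fun_prop
    · intro y hy
      exact ((Real.differentiable_sin y).sub (differentiable_id y)).add
        ((differentiable_pow 3 y).div_const 6) |>.differentiableWithinAt
    · intro y hy
      have hd : HasDerivAt (fun x : ℝ => Real.sin x - x + x ^ 3 / 6)
          (Real.cos y - 1 + 3 * y ^ 2 / 6) y := by
        have := ((Real.hasDerivAt_sin y).sub (hasDerivAt_id y)).add
          ((hasDerivAt_pow 3 y).div_const 6)
        exact this.congr_deriv (by norm_num)
      rw [hd.deriv]
      have := Real.one_sub_sq_div_two_le_cos (x := y)
      nlinarith
  have h0 := key (Set.self_mem_Ici) (Set.mem_Ici.2 hx) hx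
  simp only [Real.sin_zero] at h0
  nlinarith [h0]

lemma aux_cos_ub (x : ℝ) : Real.cos x ≤ 1 - x ^ 2 / 2 + x ^ 4 / 24 := by
  wlog hx : 0 ≤ x generalizing x
  · have := this (-x) (by linarith)
    simpa [show ((-x)^4:ℝ)=x^4 by ring] using this
  have key : MonotoneOn (fun x : ℝ => 1 - x ^ 2 / 2 + x ^ 4 / 24 - Real.cos x) (Set.Ici 0) := by
    apply monotoneOn_of_deriv_nonneg (convex_Ici 0)
    · fun_prop
    · intro y hy
      exact (((differentiable_const 1).sub ((differentiable_pow 2).div_const 2)).add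
        ((differentiable_pow 4).div_const 24)).sub Real.differentiable_cos |>.differentiableAt.differentiableWithinAt
    · intro y hy
      have hy0 : 0 ≤ y := le_of_lt (by simpa using hy)
      have hd : HasDerivAt (fun x : ℝ => 1 - x ^ 2 / 2 + x ^ 4 / 24 - Real.cos x)
          (0 - 2 * y ^ 1 / 2 + 4 * y ^ 3 / 24 - (-Real.sin y)) y := by
        exact (((hasDerivAt_const y (1:ℝ)).sub ((hasDerivAt_pow 2 y).div_const 2)).add
          ((hasDerivAt_pow 4 y).div_const 24)).sub (Real.hasDerivAt_cos y)
      rw [hd.deriv]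
      have := aux_sin_lb y hy0
      nlinarith
  have h0 := key (Set.self_mem_Ici) (Set.mem_Ici.2 hx) hx
  simp only [Real.cos_zero] at h0
  nlinarith [h0]

theorem stmt19 (t l : ℝ) (h0 : 0 ≤ l) (h1 : l ≤ 1) :
    ‖1 + (l : ℂ) * (Complex.exp (t * Complex.I) - 1)‖ ≤
      Real.exp (-(1 / 2) * (1 - t ^ 2 / 12) * (l * (1 - l)) * t ^ 2) := by
  set z : ℂ := 1 + (l : ℂ) * (Complex.exp (t * Complex.I) - 1) with hz
  set c : ℝ := -(1 / 2) * (1 - t ^ 2 / 12) * (l * (1 - l)) * t ^ 2 with hc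
  have hre : z.re = 1 + l * (Real.cos t - 1) := by
    simp [hz, Complex.exp_mul_I, Complex.add_re, Complex.mul_re, Complex.cos_ofReal_re, Complex.sin_ofReal_re, Complex.cos_ofReal_im, Complex.sin_ofReal_im]
  have him : z.im = l * Real.sin t := by
    simp [hz, Complex.exp_mul_I, Complex.add_im, Complex.mul_im, Complex.cos_ofReal_re, Complex.sin_ofReal_re, Complex.cos_ofReal_im, Complex.sin_ofReal_im]
  have hsq : ‖z‖ ^ 2 = 1 - 2 * (l * (1 - l)) * (1 - Real.cos t) := by
    rw [Complex.sq_norm, Complex.normSq_apply, hre, him]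
    linear_combination l ^ 2 * (Real.sin_sq_add_cos_sq t)
  have hcos := aux_cos_ub t
  have hL : 0 ≤ l * (1 - l) := mul_nonneg h0 (by linarith)
  have h2 : ‖z‖ ^ 2 ≤ 1 + 2 * c := by
    rw [hsq, hc]
    nlinarith [mul_nonneg hL (sq_nonneg t), mul_nonneg hL (sq_nonneg (t^2))]
  have h3 : (1 : ℝ) + 2 * c ≤ Real.exp (2 * c) := by
    have := Real.add_one_le_exp (2 * c)
    linarith
  have h4 : Real.exp (2 * c) = Real.exp c ^ 2 := by
    rw [← Real.exp_nat_mul]; ring_nf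
  have habs : 0 ≤ ‖z‖ := norm_nonneg z
  have hec : 0 < Real.exp c := Real.exp_pos c
  nlinarith [h2, h3, h4]
end
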